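/- Optimality of the conditional-expectation profile: under the assumptions of the Pythagorean identity with α ∈ (0,1), for every integrable nonnegative ℓ̃_r one has D_α(π ‖ π̃_r) ≥ D_α(π ‖ π_r^opt), with equality if and only if π̃_r = π_r^opt as measures. -/

import Mathlib

set_option maxHeartbeats 1000000


open MeasureTheory ProbabilityTheory

/-- Equality case in the weighted AM-GM (Young) inequality for two positive reals. -/
lemma young_eq_aux {a b w : ℝ} (ha : 0 < a) (hb : 0 < b) (hw0 : 0 < w) (hw1 : w < 1)
    (h : a ^ w * b ^ (1 - w) = w * a + (1 - w) * b) : a = b := by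
  by_contra hne
  set s : ℝ := a / b - 1 with hs
  have hab : 0 < a / b := div_pos ha hb
  have hs1 : -1 ≤ s := by simp only [hs]; linarith
  have hs0 : s ≠ 0 := by
    simp only [hs, sub_ne_zero]
    intro hc
    exact hne ((div_eq_one_iff_eq hb.ne').mp hc)
  have hkey := rpow_one_add_lt_one_add_mul_self hs1 hs0 hw0 hw1
  have h1 : (1 : ℝ) + s = a / b := by simp [hs]
  rw [h1] at hkey
  have hblow : a ^ w * b ^ (1 - w) = (a / b) ^ w * b := by
    rw [Real.div_rpow ha.le hb.le,
      Real.rpow_one_sub' hb.le (by intro hc; linarith : (1:ℝ) - w ≠ 0)]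
    ring
  have hlt : a ^ w * b ^ (1 - w) < (1 + w * s) * b := by
    rw [hblow]; exact mul_lt_mul_of_pos_right hkey hb
  have hr : (1 + w * s) * b = w * a + (1 - w) * b := by
    simp only [hs]
    field_simp
    ring
  rw [h, hr] at hlt
  exact lt_irrefl _ hlt

/-- A conditional expectation of an everywhere positive integrable function is a.e. positive. -/
lemma condexp_pos_ae_aux {X : Type*} {m m0 : MeasurableSpace X} (hm : m ≤ m0) {μ : Measure X}
    [IsFiniteMeasure μ] [SigmaFinite (μ.trim hm)] {f : X → ℝ} (hf : Integrable f μ)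
    (hfpos : ∀ x, 0 < f x) : ∀ᵐ x ∂μ, 0 < (μ[f|m]) x := by
  set s : Set X := {x | (μ[f|m]) x ≤ 0} with hsdef
  have hs_m : MeasurableSet[m] s := by
    have hpre : s = (μ[f|m]) ⁻¹' Set.Iic 0 := rfl
    rw [hpre]
    exact stronglyMeasurable_condExp.measurable measurableSet_Iic
  have hs : MeasurableSet s := hm _ hs_m
  have h1 : ∫ x in s, f x ∂μ = ∫ x in s, (μ[f|m]) x ∂μ := (setIntegral_condExp hm hf hs_m).symm
  have h2 : ∫ x in s, (μ[f|m]) x ∂μ ≤ 0 := by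
    refine integral_nonpos_of_ae ?_
    filter_upwards [ae_restrict_mem hs] with x hx
    exact hx
  have hμs : μ s = 0 := by
    by_contra hne
    have hpos : 0 < ∫ x in s, f x ∂μ := by
      rw [integral_pos_iff_support_of_nonneg_ae (ae_of_all _ fun x => (hfpos x).le)
        hf.integrableOn]
      have hsupp : Function.support f = Set.univ := Set.eq_univ_of_forall fun x => (hfpos x).ne'
      rw [hsupp, Measure.restrict_apply_univ]
      exact lt_of_le_of_ne (zero_le) (Ne.symm hne)
    rw [h1] at hpos
    linarith
  have : ∀ᵐ x ∂μ, x ∉ s := by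
    rw [ae_iff]
    simpa using hμs
  filter_upwards [this] with x hx
  exact not_le.mp hx

/-- Any function of the form `ℓt ∘ φr` which is a.e. strongly measurable admits a version
`k ∘ φr` with `k` genuinely strongly measurable (descent through the push-forward, via
disintegration). -/
lemma exists_factor_aux {d r : ℕ} (μ : Measure (Fin d → ℝ)) [IsProbabilityMeasure μ]
    (φr : (Fin d → ℝ) → (Fin r → ℝ)) (hφ : Measurable φr)
    (ℓt : (Fin r → ℝ) → ℝ) (h_aesm : AEStronglyMeasurable (fun x => ℓt (φr x)) μ) :
    ∃ k : (Fin r → ℝ) → ℝ, StronglyMeasurable k ∧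
      (fun x => k (φr x)) =ᵐ[μ] fun x => ℓt (φr x) := by
  obtain ⟨h, h_sm, h_ae⟩ := h_aesm
  -- the coupling measure
  set T : (Fin d → ℝ) → (Fin r → ℝ) × (Fin d → ℝ) := fun x => (φr x, x) with hT
  have hT_meas : Measurable T := hφ.prodMk measurable_id
  set ρ : Measure ((Fin r → ℝ) × (Fin d → ℝ)) := μ.map T with hρ
  haveI : IsProbabilityMeasure ρ := Measure.isProbabilityMeasure_map hT_meas.aemeasurable
  have hfst : ρ.fst = μ.map φr := Measure.fst_map_prodMk (X := φr) measurable_id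
  -- bad set
  have hnull : μ {x | ¬ ℓt (φr x) = h x} = 0 := ae_iff.mp h_ae
  obtain ⟨N, hN_sub, hN_meas, hN0⟩ := exists_measurable_superset_of_null hnull
  have hρ1 : ∀ᵐ p ∂ρ, p.2 ∉ N := by
    rw [ae_iff]
    have hset : {p : (Fin r → ℝ) × (Fin d → ℝ) | ¬p.2 ∉ N}
        = Prod.snd ⁻¹' N := by ext p; simp
    rw [hset, hρ, Measure.map_apply hT_meas (measurable_snd hN_meas)]
    exact hN0
  have hρ2 : ∀ᵐ p ∂ρ, φr p.2 = p.1 := by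
    rw [ae_iff]
    have hset2 : MeasurableSet {p : (Fin r → ℝ) × (Fin d → ℝ) | ¬ φr p.2 = p.1} := by
      have := (measurableSet_eq_fun (f := fun p : (Fin r → ℝ) × (Fin d → ℝ) => φr p.2)
        (g := fun p => p.1) (hφ.comp measurable_snd) measurable_fst).compl
      simpa [Set.compl_setOf] using this
    rw [hρ, Measure.map_apply hT_meas hset2]
    have : T ⁻¹' {p : (Fin r → ℝ) × (Fin d → ℝ) | ¬ φr p.2 = p.1} = ∅ := by
      ext x; simp [hT]
    rw [this]
    simp
  have hρall : ∀ᵐ p ∂ρ, ℓt p.1 = h p.2 := by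
    filter_upwards [hρ1, hρ2] with p hp1 hp2
    have : ℓt (φr p.2) = h p.2 := by
      by_contra hc
      exact hp1 (hN_sub hc)
    rw [← hp2]
    exact this
  -- disintegrate
  have hdis : ρ.fst ⊗ₘ ρ.condKernel = ρ := ρ.disintegrate ρ.condKernel
  have hae2 : ∀ᵐ θ ∂ρ.fst, ∀ᵐ x ∂ρ.condKernel θ, ℓt θ = h x :=
    Measure.ae_ae_of_ae_compProd (by rw [hdis]; exact hρall)
  set k0 : (Fin r → ℝ) → ℝ := fun θ => ∫ x, h x ∂ρ.condKernel θ with hk0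
  have hk0_aesm : AEStronglyMeasurable k0 ρ.fst :=
    AEStronglyMeasurable.integral_condKernel
      ((h_sm.comp_measurable measurable_snd).aestronglyMeasurable)
  have hk0_ae : ∀ᵐ θ ∂ρ.fst, k0 θ = ℓt θ := by
    filter_upwards [hae2] with θ hθ
    haveI : IsProbabilityMeasure (ρ.condKernel θ) := IsMarkovKernel.isProbabilityMeasure θ
    calc k0 θ = ∫ _, ℓt θ ∂ρ.condKernel θ := by
          refine integral_congr_ae ?_
          filter_upwards [hθ] with x hx
          exact hx.symm
      _ = ℓt θ := by simp
  refine ⟨hk0_aesm.mk _, hk0_aesm.stronglyMeasurable_mk, ?_⟩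
  have hmk : ∀ᵐ θ ∂μ.map φr, hk0_aesm.mk k0 θ = ℓt θ := by
    rw [← hfst]
    filter_upwards [hk0_aesm.ae_eq_mk, hk0_ae] with θ h1 h2
    rw [← h1]
    exact h2
  have := ae_of_ae_map hφ.aemeasurable hmk
  filter_upwards [this] with x hx
  exact hx

/-- Optimality of the conditional-expectation profile: for `α ∈ (0,1)`,
`D_α(π‖π̃_r) ≥ D_α(π‖π_r^opt)`, with equality iff `π̃_r = π_r^opt` as measures. -/
theorem optimal_profile_optimality
    {d r : ℕ} (μ : Measure (Fin d → ℝ)) [IsProbabilityMeasure μ]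
    (ℓ : (Fin d → ℝ) → ℝ) (φr : (Fin d → ℝ) → (Fin r → ℝ)) (hφ : Measurable φr)
    (hℓ_int : Integrable ℓ μ) (hℓ_pos : ∀ x, 0 < ℓ x)
    (α : ℝ) (hα : α ∈ Set.Ioo (0:ℝ) 1)
    (Zπ : ℝ) (hZπ : Zπ = ∫ x, ℓ x ∂μ) (hZπ_pos : 0 < Zπ)
    (m : MeasurableSpace (Fin d → ℝ))
    (hm : m = MeasurableSpace.comap φr inferInstance)
    (Lopt : (Fin d → ℝ) → ℝ)
    (hLopt : Lopt = fun x => (condExp m μ (fun y => ℓ y ^ α) x) ^ (1/α))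
    (Zr : ℝ) (hZr : Zr = ∫ x, Lopt x ∂μ)
    (ℓt : (Fin r → ℝ) → ℝ) (hℓt_int : Integrable (fun x => ℓt (φr x)) μ)
    (hℓt_pos : ∀ θ, 0 < ℓt θ)
    (Zt : ℝ) (hZt : Zt = ∫ x, ℓt (φr x) ∂μ) (hZt_pos : 0 < Zt)
    (D : ((Fin d → ℝ) → ℝ) → ((Fin d → ℝ) → ℝ) → ℝ)
    (hD : D = fun p q => (1 / (α * (α - 1))) * ((∫ x, (p x / q x) ^ α * q x ∂μ) - 1))
    (hint1 : Integrable
      (fun x => ((ℓ x / Zπ) / (ℓt (φr x) / Zt)) ^ α * (ℓt (φr x) / Zt)) μ)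
    (hint2 : Integrable
      (fun x => ((ℓ x / Zπ) / (Lopt x / Zr)) ^ α * (Lopt x / Zr)) μ) :
    D (fun x => ℓ x / Zπ) (fun x => Lopt x / Zr)
        ≤ D (fun x => ℓ x / Zπ) (fun x => ℓt (φr x) / Zt) ∧
    (D (fun x => ℓ x / Zπ) (fun x => ℓt (φr x) / Zt)
        = D (fun x => ℓ x / Zπ) (fun x => Lopt x / Zr) ↔
      μ.withDensity (fun x => ENNReal.ofReal (ℓt (φr x) / Zt))
        = μ.withDensity (fun x => ENNReal.ofReal (Lopt x / Zr))) := by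
  obtain ⟨hα0, hα1⟩ := hα
  have hαne : α ≠ 0 := ne_of_gt hα0
  have h1α : (0:ℝ) < 1 - α := by linarith
  have h1αne : (1:ℝ) - α ≠ 0 := ne_of_gt h1α
  have hm_le : m ≤ (MeasurableSpace.pi : MeasurableSpace (Fin d → ℝ)) := by
    rw [hm]; exact hφ.comap_le
  haveI : IsFiniteMeasure (μ.trim hm_le) := isFiniteMeasure_trim hm_le
  haveI : SigmaFinite (μ.trim hm_le) := inferInstance
  set E : (Fin d → ℝ) → ℝ := μ[fun y => ℓ y ^ α|m] with hE
  -- basic facts about ℓ^α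
  have hℓα_pos : ∀ x, 0 < ℓ x ^ α := fun x => Real.rpow_pos_of_pos (hℓ_pos x) α
  have hℓ_aesm := hℓ_int.aestronglyMeasurable
  have hrpow_meas : ∀ c : ℝ, 0 ≤ c → Measurable (fun t : ℝ => t ^ c) := fun c hc =>
    (Real.continuous_rpow_const hc).measurable
  have hℓα_aesm : AEStronglyMeasurable[MeasurableSpace.pi] (fun y => ℓ y ^ α) μ :=
    ((hrpow_meas α hα0.le).comp_aemeasurable hℓ_aesm.aemeasurable).aestronglyMeasurable
  have hℓα_int : Integrable (fun y => ℓ y ^ α) μ := by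
    refine Integrable.mono ((integrable_const (1:ℝ)).add hℓ_int) hℓα_aesm (ae_of_all _ fun x => ?_)
    have hx := hℓ_pos x
    have hb : ℓ x ^ α ≤ 1 + ℓ x := by
      rcases le_total (ℓ x) 1 with h | h
      · have := Real.rpow_le_one hx.le h hα0.le
        linarith
      · have h2 := Real.rpow_le_rpow_of_exponent_le h hα1.le
        rw [Real.rpow_one] at h2
        linarith
    simp only [Pi.add_apply, Real.norm_eq_abs]
    rw [abs_of_pos (hℓα_pos x), abs_of_pos (by linarith : (0:ℝ) < 1 + ℓ x)]
    exact hb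
  -- positivity of conditional expectations
  have hE_pos : ∀ᵐ x ∂μ, 0 < E x := condexp_pos_ae_aux hm_le hℓα_int hℓα_pos
  set b : (Fin d → ℝ) → ℝ := μ[ℓ|m] with hbdef
  have hb_pos : ∀ᵐ x ∂μ, 0 < b x := condexp_pos_ae_aux hm_le hℓ_int hℓ_pos
  have hb_sm : StronglyMeasurable[m] b := stronglyMeasurable_condExp
  have hb_int : Integrable b μ := integrable_condExp
  have hE_sm : StronglyMeasurable[m] E := stronglyMeasurable_condExp
  have hE_int : Integrable E μ := integrable_condExp
  -- pull-out lemma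
  have pullout : ∀ G : (Fin d → ℝ) → ℝ, StronglyMeasurable[m] G →
      Integrable (fun x => G x * ℓ x ^ α) μ →
      ∫ x, G x * ℓ x ^ α ∂μ = ∫ x, G x * E x ∂μ := by
    intro G hG hGi
    have hGi' : Integrable (G * fun y => ℓ y ^ α) μ := hGi
    have h := condExp_mul_of_stronglyMeasurable_left hG hGi' hℓα_int
    calc ∫ x, G x * ℓ x ^ α ∂μ
        = ∫ x, (μ[G * fun y => ℓ y ^ α|m]) x ∂μ := (integral_condExp hm_le).symm
      _ = ∫ x, G x * E x ∂μ := integral_congr_ae h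
  -- Lopt is a.e. positive and integrable, via E ≤ b^α
  have hb1α_m : StronglyMeasurable[m] (fun x => b x ^ (1 - α)) :=
    ((hrpow_meas (1-α) h1α.le).comp hb_sm.measurable).stronglyMeasurable
  have hmix_int : Integrable (fun x => b x ^ (1 - α) * ℓ x ^ α) μ := by
    refine Integrable.mono' ((hℓ_int.const_mul α).add (hb_int.const_mul (1 - α)))
      (((hb1α_m.mono hm_le).aestronglyMeasurable).mul hℓα_aesm) ?_
    filter_upwards [hb_pos] with x hbx
    have hy := Real.geom_mean_le_arith_mean2_weighted h1α.le hα0.le hbx.le (hℓ_pos x).le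
      (by ring)
    rw [Real.norm_eq_abs, abs_of_nonneg
      (mul_nonneg (Real.rpow_nonneg hbx.le _) (Real.rpow_nonneg (hℓ_pos x).le _))]
    calc b x ^ (1-α) * ℓ x ^ α ≤ (1-α) * b x + α * ℓ x := hy
      _ = α * ℓ x + (1-α) * b x := by ring
  have hmix_le : (fun x => b x ^ (1-α) * ℓ x ^ α) ≤ᵐ[μ] fun x => α * ℓ x + (1-α) * b x := by
    filter_upwards [hb_pos] with x hbx
    have hy := Real.geom_mean_le_arith_mean2_weighted h1α.le hα0.le hbx.le (hℓ_pos x).le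
      (by ring)
    calc b x ^ (1-α) * ℓ x ^ α ≤ (1-α) * b x + α * ℓ x := hy
      _ = α * ℓ x + (1-α) * b x := by ring
  have hrhs_int : Integrable (fun x => α * ℓ x + (1-α) * b x) μ :=
    (hℓ_int.const_mul α).add (hb_int.const_mul (1-α))
  have hcond_rhs : μ[fun x => α * ℓ x + (1-α) * b x|m] =ᵐ[μ] b := by
    have hadd : μ[(fun x => α * ℓ x) + fun x => (1-α) * b x|m]
        =ᵐ[μ] μ[fun x => α * ℓ x|m] + μ[fun x => (1-α) * b x|m] :=
      condExp_add (hℓ_int.const_mul α) (hb_int.const_mul (1-α)) m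
    have h1 : μ[fun x => α * ℓ x|m] =ᵐ[μ] fun x => α * b x := by
      have := condExp_smul (μ := μ) (m := m) (α : ℝ) ℓ
      exact this
    have h2 : μ[fun x => (1-α) * b x|m] =ᵐ[μ] fun x => (1-α) * b x := by
      have hsm : StronglyMeasurable[m] (fun x => (1-α) * b x) :=
        (hb_sm.const_mul (1-α))
      rw [condExp_of_stronglyMeasurable hm_le hsm (hb_int.const_mul (1-α))]
    calc μ[fun x => α * ℓ x + (1-α) * b x|m]
        = μ[(fun x => α * ℓ x) + fun x => (1-α) * b x|m] := rfl
      _ =ᵐ[μ] μ[fun x => α * ℓ x|m] + μ[fun x => (1-α) * b x|m] := hadd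
      _ =ᵐ[μ] fun x => α * b x + (1-α) * b x := h1.add h2
      _ =ᵐ[μ] b := by
          refine Filter.EventuallyEq.of_eq (funext fun x => ?_)
          show α * b x + (1 - α) * b x = b x
          ring
  have hcond_mix : μ[fun x => b x ^ (1-α) * ℓ x ^ α|m]
      =ᵐ[μ] fun x => b x ^ (1-α) * E x := by
    have hGi' : Integrable ((fun x => b x ^ (1-α)) * fun y => ℓ y ^ α) μ := hmix_int
    have hpull : μ[(fun x => b x ^ (1-α)) * fun y => ℓ y ^ α|m]
        =ᵐ[μ] (fun x => b x ^ (1-α)) * μ[fun y => ℓ y ^ α|m] :=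
      condExp_mul_of_stronglyMeasurable_left hb1α_m hGi' hℓα_int
    exact hpull
  have hEb : ∀ᵐ x ∂μ, E x ≤ b x ^ α := by
    have hmono := condExp_mono (m := m) hmix_int hrhs_int hmix_le
    filter_upwards [hmono, hcond_mix, hcond_rhs, hb_pos] with x h1 h2 h3 hbx
    rw [h2] at h1
    rw [h3] at h1
    -- b^{1-α} * E ≤ b = b^{1-α} * b^α
    have hbb : b x ^ (1-α) * b x ^ α = b x := by
      rw [← Real.rpow_add hbx]
      norm_num
    have hpos : 0 < b x ^ (1-α) := Real.rpow_pos_of_pos hbx _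
    have := h1.trans_eq hbb.symm
    exact le_of_mul_le_mul_left this hpos
  have hLopt_m : StronglyMeasurable[m] Lopt := by
    rw [hLopt]
    exact ((hrpow_meas (1/α) (by positivity)).comp hE_sm.measurable).stronglyMeasurable
  have hLopt_pos : ∀ᵐ x ∂μ, 0 < Lopt x := by
    filter_upwards [hE_pos] with x hx
    rw [hLopt]
    exact Real.rpow_pos_of_pos hx _
  have hLα : (fun x => Lopt x ^ α) =ᵐ[μ] E := by
    filter_upwards [hE_pos] with x hx
    rw [hLopt]
    simp only
    rw [← Real.rpow_mul hx.le, one_div, inv_mul_cancel₀ hαne, Real.rpow_one]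
  have hLopt_le_b : ∀ᵐ x ∂μ, Lopt x ≤ b x := by
    filter_upwards [hEb, hE_pos, hb_pos] with x h1 h2 h3
    rw [hLopt]
    simp only
    calc E x ^ (1/α) ≤ (b x ^ α) ^ (1/α) := Real.rpow_le_rpow h2.le h1 (by positivity)
      _ = b x := by
          rw [← Real.rpow_mul h3.le, mul_one_div, div_self hαne, Real.rpow_one]
  have hLopt_int : Integrable Lopt μ := by
    refine Integrable.mono hb_int ((hLopt_m.mono hm_le).aestronglyMeasurable) ?_
    filter_upwards [hLopt_pos, hLopt_le_b, hb_pos] with x h1 h2 h3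
    rw [Real.norm_eq_abs, Real.norm_eq_abs, abs_of_pos h1, abs_of_pos h3]
    exact h2
  have hZr_pos : 0 < Zr := by
    rw [hZr]
    rw [integral_pos_iff_support_of_nonneg_ae
      (by filter_upwards [hLopt_pos] with x hx; exact hx.le) hLopt_int]
    have h0 : μ (Function.support Lopt)ᶜ = 0 := by
      refine measure_mono_null ?_ (ae_iff.mp hLopt_pos)
      intro x hx
      simp only [Set.mem_compl_iff, Function.mem_support, not_not] at hx
      simp [hx]
    have hμsupp : μ (Function.support Lopt) = 1 := by
      have hms : MeasurableSet[MeasurableSpace.pi] (Function.support Lopt) := by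
        have : Function.support Lopt = Lopt ⁻¹' ({0}ᶜ) := by
          ext x; simp [Function.mem_support]
        rw [this]
        exact (hLopt_m.mono hm_le).measurable (measurableSet_singleton 0).compl
      exact (prob_compl_eq_zero_iff hms).mp h0
    rw [hμsupp]
    norm_num
  have hZrα_pos : 0 < Zr ^ α := Real.rpow_pos_of_pos hZr_pos α
  have hZπα_pos : 0 < Zπ ^ α := Real.rpow_pos_of_pos hZπ_pos α
  -- measurable factor of ℓt∘φr
  obtain ⟨k, hk_sm, hk_ae⟩ := exists_factor_aux μ φr hφ ℓt hℓt_int.aestronglyMeasurable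
  set Q : (Fin d → ℝ) → ℝ := fun x => k (φr x) with hQdef
  have hφ_m : Measurable[m] φr := by
    rw [hm]
    exact Measurable.of_comap_le le_rfl
  have hQ_m : StronglyMeasurable[m] Q := (hk_sm.measurable.comp hφ_m).stronglyMeasurable
  have hQ_int : Integrable Q μ := hℓt_int.congr hk_ae.symm
  have hQ_integral : ∫ x, Q x ∂μ = Zt := by
    rw [hZt]
    exact integral_congr_ae hk_ae
  -- the three normalized densities
  set q : (Fin d → ℝ) → ℝ := fun x => ℓt (φr x) / Zt with hqdef
  set P : (Fin d → ℝ) → ℝ := fun x => Lopt x / Zr with hPdef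
  set QZ : (Fin d → ℝ) → ℝ := fun x => Q x / Zt with hQZdef
  have hq_pos : ∀ x, 0 < q x := fun x => div_pos (hℓt_pos _) hZt_pos
  have hqQZ : q =ᵐ[μ] QZ := by
    filter_upwards [hk_ae] with x hx
    simp only [hqdef, hQZdef]
    rw [hx]
  have hP_pos : ∀ᵐ x ∂μ, 0 < P x := by
    filter_upwards [hLopt_pos] with x hx
    exact div_pos hx hZr_pos
  have hQZ_pos : ∀ᵐ x ∂μ, 0 < QZ x := by
    filter_upwards [hqQZ] with x hx
    rw [← hx]
    exact hq_pos x
  have hP_m : StronglyMeasurable[m] P := by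
    have : P = fun x => Lopt x * (Zr)⁻¹ := by funext x; rw [hPdef]; ring
    rw [this]
    exact hLopt_m.mul_const _
  have hQZ_m : StronglyMeasurable[m] QZ := by
    have : QZ = fun x => Q x * (Zt)⁻¹ := by funext x; rw [hQZdef]; ring
    rw [this]
    exact hQ_m.mul_const _
  have hP_int : Integrable P μ := hLopt_int.div_const Zr
  have hQZ_int : Integrable QZ μ := hQ_int.div_const Zt
  have hP_integral : ∫ x, P x ∂μ = 1 := by
    simp only [hPdef]
    rw [integral_div, ← hZr, div_self hZr_pos.ne']
  have hQZ_integral : ∫ x, QZ x ∂μ = 1 := by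
    simp only [hQZdef]
    rw [integral_div, hQ_integral, div_self hZt_pos.ne']
  -- pointwise algebraic identity
  have hpt : ∀ a c : ℝ, 0 < a → 0 < c → (a / c) ^ α * c = a ^ α * c ^ (1 - α) := by
    intro a c ha hc
    rw [Real.div_rpow ha.le hc.le, Real.rpow_one_sub' hc.le h1αne]
    have hcα : c ^ α ≠ 0 := (Real.rpow_pos_of_pos hc α).ne'
    field_simp
  -- rewrite the D-integrands
  have hA0 : ∀ x, ((ℓ x / Zπ) / (ℓt (φr x) / Zt)) ^ α * (ℓt (φr x) / Zt)
      = (ℓ x ^ α * (ℓt (φr x) / Zt) ^ (1 - α)) / Zπ ^ α := by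
    intro x
    rw [hpt _ _ (div_pos (hℓ_pos x) hZπ_pos) (hq_pos x),
      Real.div_rpow (hℓ_pos x).le hZπ_pos.le]
    ring
  have hB0 : ∀ᵐ x ∂μ, ((ℓ x / Zπ) / (Lopt x / Zr)) ^ α * (Lopt x / Zr)
      = (ℓ x ^ α * (Lopt x / Zr) ^ (1 - α)) / Zπ ^ α := by
    filter_upwards [hP_pos] with x hx
    rw [hpt _ _ (div_pos (hℓ_pos x) hZπ_pos) hx, Real.div_rpow (hℓ_pos x).le hZπ_pos.le]
    ring
  -- integrabilities of ℓ^α * (density)^{1-α}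
  have hint1' : Integrable (fun x => ℓ x ^ α * q x ^ (1 - α)) μ := by
    have h := hint1.const_mul (Zπ ^ α)
    refine h.congr (ae_of_all _ fun x => ?_)
    show Zπ ^ α * (((ℓ x / Zπ) / (ℓt (φr x) / Zt)) ^ α * (ℓt (φr x) / Zt))
        = ℓ x ^ α * ((ℓt (φr x) / Zt)) ^ (1 - α)
    rw [hA0 x]
    field_simp
  have hintQZ : Integrable (fun x => ℓ x ^ α * QZ x ^ (1 - α)) μ := by
    refine hint1'.congr ?_
    filter_upwards [hqQZ] with x hx
    rw [hx]
  have hintP : Integrable (fun x => ℓ x ^ α * P x ^ (1 - α)) μ := by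
    have h := hint2.const_mul (Zπ ^ α)
    refine h.congr ?_
    filter_upwards [hB0] with x hx
    show Zπ ^ α * (((ℓ x / Zπ) / (Lopt x / Zr)) ^ α * (Lopt x / Zr))
        = ℓ x ^ α * ((Lopt x / Zr)) ^ (1 - α)
    rw [hx]
    field_simp
  -- the key conditional-expectation replacement
  have hguse : ∀ G : (Fin d → ℝ) → ℝ, StronglyMeasurable[m] G →
      Integrable (fun x => ℓ x ^ α * G x ^ (1 - α)) μ →
      ∫ x, ℓ x ^ α * G x ^ (1 - α) ∂μ = ∫ x, Lopt x ^ α * G x ^ (1 - α) ∂μ := by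
    intro G hG hGi
    have hG' : StronglyMeasurable[m] (fun x => G x ^ (1 - α)) :=
      ((hrpow_meas (1-α) h1α.le).comp hG.measurable).stronglyMeasurable
    have hGi2 : Integrable (fun x => G x ^ (1 - α) * ℓ x ^ α) μ := by
      refine hGi.congr (ae_of_all _ fun x => ?_)
      ring
    calc ∫ x, ℓ x ^ α * G x ^ (1 - α) ∂μ
        = ∫ x, G x ^ (1 - α) * ℓ x ^ α ∂μ := by simp_rw [mul_comm]
      _ = ∫ x, G x ^ (1 - α) * E x ∂μ := pullout _ hG' hGi2
      _ = ∫ x, Lopt x ^ α * G x ^ (1 - α) ∂μ := by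
          refine integral_congr_ae ?_
          filter_upwards [hLα] with x hx
          rw [← hx]
          ring
  -- value of the optimal integral
  have hBval : ∫ x, ℓ x ^ α * P x ^ (1 - α) ∂μ = Zr ^ α := by
    rw [hguse P hP_m hintP]
    have heq : (fun x => Lopt x ^ α * P x ^ (1 - α)) =ᵐ[μ] fun x => Lopt x / Zr ^ (1 - α) := by
      filter_upwards [hLopt_pos] with x hx
      simp only [hPdef]
      rw [Real.div_rpow hx.le hZr_pos.le, ← mul_div_assoc, ← Real.rpow_add hx]
      norm_num
    rw [integral_congr_ae heq, integral_div, ← hZr]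
    rw [eq_comm, eq_div_iff (Real.rpow_pos_of_pos hZr_pos _).ne', eq_comm,
      ← Real.rpow_add hZr_pos]
    norm_num
  -- value of the candidate integral
  set J : ℝ := ∫ x, P x ^ α * QZ x ^ (1 - α) ∂μ with hJdef
  have hAval : ∫ x, ℓ x ^ α * QZ x ^ (1 - α) ∂μ = Zr ^ α * J := by
    rw [hguse QZ hQZ_m hintQZ]
    have heq : (fun x => Lopt x ^ α * QZ x ^ (1 - α))
        =ᵐ[μ] fun x => Zr ^ α * (P x ^ α * QZ x ^ (1 - α)) := by
      filter_upwards [hLopt_pos] with x hx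
      have hL : Lopt x = Zr * P x := by
        simp only [hPdef]
        field_simp
      rw [hL, Real.mul_rpow hZr_pos.le (by positivity : (0:ℝ) ≤ P x)]
      ring
    rw [integral_congr_ae heq, integral_const_mul]
  -- Young inequality: the deficiency is nonnegative with integral 1 - J
  have hlin_int : Integrable (fun x => α * P x + (1 - α) * QZ x) μ :=
    (hP_int.const_mul α).add (hQZ_int.const_mul (1 - α))
  have hPQ_aesm : AEStronglyMeasurable[MeasurableSpace.pi] (fun x => P x ^ α * QZ x ^ (1 - α)) μ := by
    have h1 : Measurable[MeasurableSpace.pi] (fun x => P x ^ α) :=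
      (hrpow_meas α hα0.le).comp (hP_m.mono hm_le).measurable
    have h2 : Measurable[MeasurableSpace.pi] (fun x => QZ x ^ (1 - α)) :=
      (hrpow_meas (1-α) h1α.le).comp (hQZ_m.mono hm_le).measurable
    exact (h1.mul h2).aestronglyMeasurable
  have hyoung : ∀ᵐ x ∂μ, P x ^ α * QZ x ^ (1 - α) ≤ α * P x + (1 - α) * QZ x := by
    filter_upwards [hP_pos, hQZ_pos] with x h1 h2
    exact Real.geom_mean_le_arith_mean2_weighted hα0.le h1α.le h1.le h2.le (by ring)
  have hPQ_int : Integrable (fun x => P x ^ α * QZ x ^ (1 - α)) μ := by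
    refine Integrable.mono' hlin_int hPQ_aesm ?_
    filter_upwards [hP_pos, hQZ_pos, hyoung] with x h1 h2 h3
    rw [Real.norm_eq_abs, abs_of_nonneg (by positivity)]
    exact h3
  have hJ_integral : ∫ x, (α * P x + (1 - α) * QZ x) ∂μ = 1 := by
    rw [integral_add (hP_int.const_mul α) (hQZ_int.const_mul (1 - α)),
      integral_const_mul, integral_const_mul, hP_integral, hQZ_integral]
    ring
  have hJ_le : J ≤ 1 := by
    rw [hJdef]
    calc (∫ x, P x ^ α * QZ x ^ (1 - α) ∂μ)
        ≤ ∫ x, (α * P x + (1 - α) * QZ x) ∂μ := integral_mono_ae hPQ_int hlin_int hyoung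
      _ = 1 := hJ_integral
  have hJ_iff : J = 1 ↔ P =ᵐ[μ] QZ := by
    constructor
    · intro hJ1
      have hΔ_int : Integrable (fun x => α * P x + (1 - α) * QZ x
          - P x ^ α * QZ x ^ (1 - α)) μ := hlin_int.sub hPQ_int
      have hΔ_nonneg : 0 ≤ᵐ[μ] fun x => α * P x + (1 - α) * QZ x
          - P x ^ α * QZ x ^ (1 - α) := by
        filter_upwards [hyoung] with x hx
        simpa using hx
      have hΔ0 : ∫ x, (α * P x + (1 - α) * QZ x - P x ^ α * QZ x ^ (1 - α)) ∂μ = 0 := by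
        rw [integral_sub hlin_int hPQ_int, hJ_integral, ← hJdef, hJ1, sub_self]
      have := (integral_eq_zero_iff_of_nonneg_ae hΔ_nonneg hΔ_int).mp hΔ0
      filter_upwards [this, hP_pos, hQZ_pos] with x h0 h1 h2
      have h0' : P x ^ α * QZ x ^ (1 - α) = α * P x + (1 - α) * QZ x := by
        have : α * P x + (1 - α) * QZ x - P x ^ α * QZ x ^ (1 - α) = 0 := h0
        linarith
      exact young_eq_aux h1 h2 hα0 hα1 h0'
    · intro hPQ
      rw [hJdef]
      have heq : (fun x => P x ^ α * QZ x ^ (1 - α)) =ᵐ[μ] P := by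
        filter_upwards [hPQ, hP_pos] with x hx h1
        rw [← hx, ← Real.rpow_add h1]
        simp
      rw [integral_congr_ae heq, hP_integral]
  -- values of the D-integrals
  have hVA : ∫ x, ((ℓ x / Zπ) / q x) ^ α * q x ∂μ = Zr ^ α * J / Zπ ^ α := by
    have h1 : ∫ x, ((ℓ x / Zπ) / q x) ^ α * q x ∂μ
        = ∫ x, (ℓ x ^ α * QZ x ^ (1 - α)) / Zπ ^ α ∂μ := by
      refine integral_congr_ae ?_
      filter_upwards [hqQZ] with x hx
      rw [hA0 x]
      have hx' : ℓt (φr x) / Zt = QZ x := hx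
      rw [hx']
    rw [h1, integral_div, hAval]
  have hVB : ∫ x, ((ℓ x / Zπ) / P x) ^ α * P x ∂μ = Zr ^ α / Zπ ^ α := by
    have h1 : ∫ x, ((ℓ x / Zπ) / P x) ^ α * P x ∂μ
        = ∫ x, (ℓ x ^ α * P x ^ (1 - α)) / Zπ ^ α ∂μ := integral_congr_ae hB0
    rw [h1, integral_div, hBval]
  have hK_neg : 1 / (α * (α - 1)) < 0 :=
    div_neg_of_pos_of_neg one_pos (mul_neg_of_pos_of_neg hα0 (by linarith))
  have hq_eq_statement : (fun x => ℓt (φr x) / Zt) = q := rfl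
  have hP_eq_statement : (fun x => Lopt x / Zr) = P := rfl
  constructor
  · -- the inequality
    rw [hD]
    beta_reduce
    have hle : Zr ^ α * J / Zπ ^ α ≤ Zr ^ α / Zπ ^ α := by
      have hnum : Zr ^ α * J ≤ Zr ^ α := by
        calc Zr ^ α * J ≤ Zr ^ α * 1 := mul_le_mul_of_nonneg_left hJ_le hZrα_pos.le
          _ = Zr ^ α := mul_one _
      gcongr
    have h2 : ∫ x, (ℓ x / Zπ / (Lopt x / Zr)) ^ α * (Lopt x / Zr) ∂μ
        = Zr ^ α / Zπ ^ α := hVB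
    have h3 : ∫ x, (ℓ x / Zπ / (ℓt (φr x) / Zt)) ^ α * (ℓt (φr x) / Zt) ∂μ
        = Zr ^ α * J / Zπ ^ α := hVA
    rw [h2, h3]
    have : Zr ^ α * J / Zπ ^ α - 1 ≤ Zr ^ α / Zπ ^ α - 1 := by linarith
    exact mul_le_mul_of_nonpos_left this hK_neg.le
  · -- the equality case
    rw [hD]
    beta_reduce
    have h2 : ∫ x, (ℓ x / Zπ / (Lopt x / Zr)) ^ α * (Lopt x / Zr) ∂μ
        = Zr ^ α / Zπ ^ α := hVB
    have h3 : ∫ x, (ℓ x / Zπ / (ℓt (φr x) / Zt)) ^ α * (ℓt (φr x) / Zt) ∂μ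
        = Zr ^ α * J / Zπ ^ α := hVA
    rw [h2, h3]
    constructor
    · intro hDeq
      have hKne : 1 / (α * (α - 1)) ≠ 0 := hK_neg.ne
      have hsub : Zr ^ α * J / Zπ ^ α - 1 = Zr ^ α / Zπ ^ α - 1 :=
        mul_left_cancel₀ hKne hDeq
      have hJ1 : J = 1 := by
        have h4 : Zr ^ α * J / Zπ ^ α = Zr ^ α / Zπ ^ α := by linarith
        have h5 : Zr ^ α * J = Zr ^ α := by
          have h6 := congrArg (fun t => t * Zπ ^ α) h4
          simpa [div_mul_cancel₀, hZπα_pos.ne'] using h6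
        have := mul_left_cancel₀ hZrα_pos.ne' (by rw [h5, mul_one] : Zr ^ α * J = Zr ^ α * 1)
        exact this
      have hPQ : P =ᵐ[μ] QZ := hJ_iff.mp hJ1
      refine withDensity_congr_ae ?_
      filter_upwards [hPQ, hqQZ] with x h1 h2
      have hxx : q x = P x := by rw [h2, h1]
      show ENNReal.ofReal (ℓt (φr x) / Zt) = ENNReal.ofReal (Lopt x / Zr)
      have hxx' : ℓt (φr x) / Zt = Lopt x / Zr := hxx
      rw [hxx']
    · intro hwd
      -- withDensity equality gives a.e. equality of the densities
      have hf_aem : AEMeasurable (fun x => ENNReal.ofReal (ℓt (φr x) / Zt)) μ :=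
        ENNReal.measurable_ofReal.comp_aemeasurable
          ((hℓt_int.aestronglyMeasurable.aemeasurable).div_const Zt)
      have hg_aem : AEMeasurable (fun x => ENNReal.ofReal (Lopt x / Zr)) μ :=
        ENNReal.measurable_ofReal.comp_aemeasurable
          (((hLopt_m.mono hm_le).measurable.aemeasurable).div_const Zr)
      have hfin : ∫⁻ x, ENNReal.ofReal (ℓt (φr x) / Zt) ∂μ ≠ ⊤ := by
        have hint : Integrable q μ := hℓt_int.div_const Zt
        have := (hasFiniteIntegral_iff_ofReal
          (ae_of_all _ fun x => (hq_pos x).le)).mp hint.2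
        exact this.ne
      have haeq := (withDensity_eq_iff hf_aem hg_aem hfin).mp hwd
      have hqP : q =ᵐ[μ] P := by
        filter_upwards [haeq, hP_pos] with x h1 h2
        exact (ENNReal.ofReal_eq_ofReal_iff (hq_pos x).le h2.le).mp h1
      have hVAB : Zr ^ α * J / Zπ ^ α = Zr ^ α / Zπ ^ α := by
        rw [← hVA, ← hVB]
        refine integral_congr_ae ?_
        filter_upwards [hqP] with x hx
        rw [hx]
      rw [hVAB]
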